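/- arXiv:2306.02826 — 2 statements merged into one kernel-verified Lean document; each statement's English description precedes it below -/
import Mathlib

section
/- Let C_i be a cluster with average cost Δ = cost_τ(C_i,A)/|C_i| and let R_I(C_i) = {x ∈ C_i : cost_τ(x,A) ≤ (ε/(4z))^z · Δ} be the inner ring. Then for any solution S with |S| ≤ m, any 0 < ε < 1/2, and any z ≥ 1: |cost(R_I(C_i),S) − |R_I(C_i)|·cost(a_i,S)| ≤ ε·cost(R_I(C_i),S) + 2ε·cost_τ(C_i,A), where a_i is the center of C_i. -/
/-- Bernoulli-type upper bound: `(1+x)^n ≤ 1 + 2nx` when `0 ≤ x` and `n*x ≤ 1/2`. -/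
lemma bern_up (x : ℝ) (n : ℕ) (hx : 0 ≤ x) (h : (n : ℝ) * x ≤ 1/2) :
    (1 + x) ^ n ≤ 1 + 2 * n * x := by
  induction n with
  | zero => simp
  | succ n ih =>
    have hn : (n : ℝ) * x ≤ 1/2 := by
      have h1 : (n : ℝ) * x ≤ ((n : ℝ) + 1) * x := by nlinarith
      push_cast at h
      linarith
    have ih' := ih hn
    have h1 : (0:ℝ) ≤ 1 + x := by linarith
    have h2 : (1+x)^(n+1) = (1+x)^n * (1+x) := by ring
    rw [h2]
    push_cast
    nlinarith [mul_le_mul_of_nonneg_right ih' h1, Nat.cast_nonneg (α := ℝ) n]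

lemma pow_sub_pow_abs (b c d : ℝ) (hb : 0 ≤ b) (hc : 0 ≤ c) (hbc : |c - b| ≤ d) (n : ℕ) :
    |c ^ (n+1) - b ^ (n+1)| ≤ ((n:ℝ)+1) * d * (c + d) ^ n := by
  have hd : 0 ≤ d := le_trans (abs_nonneg _) hbc
  have habs := abs_le.mp hbc
  have hbd : b ≤ c + d := by linarith [habs.1]
  have hcd : c ≤ c + d := by linarith
  induction n with
  | zero => simpa using hbc
  | succ n ih =>
    have key : c^(n+1+1) - b^(n+1+1) = c^(n+1)*(c-b) + b*(c^(n+1)-b^(n+1)) := by ring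
    push_cast
    calc |c^(n+1+1) - b^(n+1+1)|
        ≤ |c^(n+1)*(c-b)| + |b*(c^(n+1)-b^(n+1))| := by rw [key]; exact abs_add_le _ _
      _ = c^(n+1)*|c-b| + b*|c^(n+1)-b^(n+1)| := by
          rw [abs_mul, abs_mul, abs_of_nonneg (pow_nonneg hc _), abs_of_nonneg hb]
      _ ≤ (c+d)^(n+1)*d + (c+d)*(((n:ℝ)+1)*d*(c+d)^n) := by
          refine add_le_add ?_ ?_
          · exact mul_le_mul (pow_le_pow_left₀ hc hcd _) hbc (abs_nonneg _)
              (pow_nonneg (by linarith) _)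
          · exact mul_le_mul hbd ih (abs_nonneg _) (by linarith)
      _ = ((n:ℝ)+1+1)*d*(c+d)^(n+1) := by ring

lemma key_pt (b c d ε : ℝ) (k : ℕ) (hb : 0 ≤ b) (hc : 0 ≤ c) (hbc : |c - b| ≤ d)
    (hε : 0 < ε) (hε2 : ε < 1/2) :
    |c ^ (k+1) - b ^ (k+1)| ≤
      ε * c ^ (k+1) + ((k:ℝ)+1) * (4*((k:ℝ)+1)/ε) ^ k * d ^ (k+1) := by
  set z : ℝ := (k:ℝ)+1 with hzdef
  have hzpos : 0 < z := by positivity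
  have hd : 0 ≤ d := le_trans (abs_nonneg _) hbc
  have base := pow_sub_pow_abs b c d hb hc hbc k
  by_cases hcase : d ≤ ε/(2*z) * c
  · -- small distance case
    have hxnn : 0 ≤ ε/(2*z) := by positivity
    have hx : c + d ≤ (1 + ε/(2*z)) * c := by nlinarith
    have hcd : 0 ≤ c + d := by linarith
    have hpow : (c+d)^k ≤ ((1+ε/(2*z))*c)^k := pow_le_pow_left₀ hcd hx k
    have hbern : (1+ε/(2*z))^k ≤ 1 + 2*k*(ε/(2*z)) := by
      apply bern_up _ _ hxnn
      have hk : (k:ℝ) ≤ z := by rw [hzdef]; linarith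
      have : (k:ℝ) * (ε/(2*z)) ≤ z * (ε/(2*z)) := by
        apply mul_le_mul_of_nonneg_right hk hxnn
      have hze : z * (ε/(2*z)) = ε/2 := by field_simp
      linarith
    have h32 : 1 + 2*(k:ℝ)*(ε/(2*z)) ≤ 3/2 := by
      have hk : (k:ℝ) ≤ z := by rw [hzdef]; linarith
      have h1 : 2*(k:ℝ)*(ε/(2*z)) = (k:ℝ)/z * ε := by field_simp
      have h2 : (k:ℝ)/z ≤ 1 := by
        rw [div_le_one hzpos]; exact hk
      have h3 : (k:ℝ)/z * ε ≤ 1 * ε := by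
        apply mul_le_mul_of_nonneg_right h2 (le_of_lt hε)
      rw [h1]; linarith
    have hck : 0 ≤ c^k := pow_nonneg hc k
    have hchain : z * d * (c+d)^k ≤ ε * c^(k+1) := by
      have e1 : ((1+ε/(2*z))*c)^k = (1+ε/(2*z))^k * c^k := mul_pow _ _ _
      have e2 : (1+ε/(2*z))^k * c^k ≤ (3/2) * c^k := by
        apply mul_le_mul_of_nonneg_right _ hck
        linarith
      have e3 : (c+d)^k ≤ (3/2) * c^k := by rw [e1] at hpow; linarith
      have e4 : z * d * (c+d)^k ≤ z * d * ((3/2) * c^k) := by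
        apply mul_le_mul_of_nonneg_left e3 (by positivity)
      have e5 : z * d ≤ z * (ε/(2*z) * c) := by
        apply mul_le_mul_of_nonneg_left hcase (le_of_lt hzpos)
      have e6 : z * (ε/(2*z) * c) = ε/2 * c := by field_simp
      have e7 : z * d * ((3/2) * c^k) ≤ (ε/2 * c) * ((3/2) * c^k) := by
        apply mul_le_mul_of_nonneg_right _ (by positivity)
        rw [← e6]; exact e5
      have e8 : (ε/2 * c) * ((3/2) * c^k) = (3/4) * ε * c^(k+1) := by ring
      nlinarith [mul_nonneg (le_of_lt hε) (pow_nonneg hc (k+1))]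
    have hKnn : 0 ≤ z * (4*z/ε)^k * d^(k+1) := by positivity
    calc |c ^ (k+1) - b ^ (k+1)| ≤ z * d * (c+d)^k := base
      _ ≤ ε * c^(k+1) := hchain
      _ ≤ ε * c^(k+1) + z * (4*z/ε)^k * d^(k+1) := by linarith
  · -- large distance case
    push_neg at hcase
    have hc' : c ≤ 2*z/ε * d := by
      have h1 : ε/(2*z) * c ≤ d := le_of_lt hcase
      have h2 : (2*z/ε) * (ε/(2*z) * c) = c := by field_simp
      calc c = (2*z/ε) * (ε/(2*z) * c) := h2.symm
        _ ≤ (2*z/ε) * d := by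
            apply mul_le_mul_of_nonneg_left h1 (by positivity)
    have h2z : 1 ≤ 2*z/ε := by
      rw [le_div_iff₀ hε]; nlinarith
    have hdd : d ≤ 2*z/ε * d := by nlinarith
    have hcd4 : c + d ≤ 4*z/ε * d := by
      have : 2*z/ε * d + 2*z/ε * d = 4*z/ε * d := by ring
      linarith
    have hcdnn : 0 ≤ c + d := by linarith
    have hpow : (c+d)^k ≤ (4*z/ε * d)^k := pow_le_pow_left₀ hcdnn hcd4 k
    have e1 : (4*z/ε * d)^k = (4*z/ε)^k * d^k := mul_pow _ _ _
    have hchain : z * d * (c+d)^k ≤ z * (4*z/ε)^k * d^(k+1) := by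
      calc z * d * (c+d)^k ≤ z * d * ((4*z/ε)^k * d^k) := by
            apply mul_le_mul_of_nonneg_left _ (by positivity)
            rw [← e1]; exact hpow
        _ = z * (4*z/ε)^k * d^(k+1) := by ring
    have hεc : 0 ≤ ε * c^(k+1) := by positivity
    calc |c ^ (k+1) - b ^ (k+1)| ≤ z * d * (c+d)^k := base
      _ ≤ z * (4*z/ε)^k * d^(k+1) := hchain
      _ ≤ ε * c^(k+1) + z * (4*z/ε)^k * d^(k+1) := by linarith

open scoped Classical in
theorem stmt10 {X : Type*} [MetricSpace X] (C S : Finset X) (hS : S.Nonempty)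
    (hC : C.Nonempty) (a : X) (m z : ℕ) (hm : S.card ≤ m) (hz : 1 ≤ z)
    (ε : ℝ) (hε : 0 < ε) (hε2 : ε < 1/2)
    (R : Finset X)
    (hR : R = C.filter fun x =>
      dist x a ^ z ≤ (ε / (4 * (z : ℝ))) ^ z * ((∑ y ∈ C, dist y a ^ z) / C.card))
    (hRcard : (1 - ε) * C.card ≤ R.card) :
    |∑ x ∈ R, S.inf' hS (dist x) ^ z - (R.card : ℝ) * S.inf' hS (dist a) ^ z| ≤
      ε * ∑ x ∈ R, S.inf' hS (dist x) ^ z + 2 * ε * ∑ x ∈ C, dist x a ^ z := by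
  obtain ⟨k, rfl⟩ : ∃ k, z = k + 1 := ⟨z - 1, by omega⟩
  have hf0 : ∀ x : X, 0 ≤ S.inf' hS (dist x) :=
    fun x => Finset.le_inf' hS _ (fun y _ => dist_nonneg)
  have hfle : ∀ x y : X, S.inf' hS (dist x) ≤ dist x y + S.inf' hS (dist y) := by
    intro x y
    obtain ⟨s, hsS, hfy⟩ := S.exists_mem_eq_inf' hS (dist y)
    calc S.inf' hS (dist x) ≤ dist x s := Finset.inf'_le _ hsS
      _ ≤ dist x y + dist y s := dist_triangle _ _ _
      _ = dist x y + S.inf' hS (dist y) := by rw [hfy]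
  set f : X → ℝ := fun x => S.inf' hS (dist x) with hf
  have hlip : ∀ x : X, |f x - f a| ≤ dist x a := by
    intro x
    rw [abs_sub_le_iff]
    constructor
    · linarith [hfle x a]
    · have := hfle a x
      rw [dist_comm a x] at this
      linarith
  set zr : ℝ := (k:ℝ)+1 with hzr
  have hzrpos : 0 < zr := by positivity
  have hKnn : 0 ≤ zr * (4*zr/ε)^k := by positivity
  -- pointwise bound
  have hpt : ∀ x ∈ R, |f x ^ (k+1) - f a ^ (k+1)| ≤
      ε * f x ^ (k+1) + zr * (4*zr/ε)^k * dist x a ^ (k+1) := by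
    intro x _
    exact key_pt (f a) (f x) (dist x a) ε k (hf0 a) (hf0 x) (hlip x) hε hε2
  -- sum manipulation
  have hsum0 : (∑ x ∈ R, f x ^ (k+1)) - (R.card : ℝ) * f a ^ (k+1) =
      ∑ x ∈ R, (f x ^ (k+1) - f a ^ (k+1)) := by
    rw [Finset.sum_sub_distrib, Finset.sum_const, nsmul_eq_mul]
  have hsum1 : |∑ x ∈ R, f x ^ (k+1) - (R.card : ℝ) * f a ^ (k+1)| ≤
      ∑ x ∈ R, |f x ^ (k+1) - f a ^ (k+1)| := by
    rw [hsum0]; exact Finset.abs_sum_le_sum_abs _ _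
  have hsum2 : ∑ x ∈ R, |f x ^ (k+1) - f a ^ (k+1)| ≤
      ε * (∑ x ∈ R, f x ^ (k+1)) + zr * (4*zr/ε)^k * ∑ x ∈ R, dist x a ^ (k+1) := by
    rw [Finset.mul_sum, Finset.mul_sum, ← Finset.sum_add_distrib]
    exact Finset.sum_le_sum hpt
  -- ring bound
  have hCnn : (0:ℝ) ≤ ∑ y ∈ C, dist y a ^ (k+1) :=
    Finset.sum_nonneg fun y _ => pow_nonneg dist_nonneg _
  have hCcard : (0:ℝ) < C.card := by exact_mod_cast Finset.card_pos.mpr hC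
  have hTnn : (0:ℝ) ≤ (ε / (4 * ((k:ℝ)+1))) ^ (k+1) *
      ((∑ y ∈ C, dist y a ^ (k+1)) / C.card) := by positivity
  have hring : ∑ x ∈ R, dist x a ^ (k+1) ≤
      (ε / (4 * zr)) ^ (k+1) * ∑ y ∈ C, dist y a ^ (k+1) := by
    have hmem : ∀ x ∈ R, dist x a ^ (k+1) ≤
        (ε / (4 * ((k:ℝ)+1))) ^ (k+1) * ((∑ y ∈ C, dist y a ^ (k+1)) / C.card) := by
      intro x hx
      rw [hR] at hx
      have := (Finset.mem_filter.mp hx).2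
      push_cast at this ⊢
      convert this using 3 <;> push_cast <;> ring
    have hsub : R ⊆ C := by rw [hR]; exact Finset.filter_subset _ _
    have hcardle : (R.card : ℝ) ≤ (C.card : ℝ) := by
      exact_mod_cast Finset.card_le_card hsub
    calc ∑ x ∈ R, dist x a ^ (k+1)
        ≤ R.card • ((ε / (4 * ((k:ℝ)+1))) ^ (k+1) *
            ((∑ y ∈ C, dist y a ^ (k+1)) / C.card)) :=
          Finset.sum_le_card_nsmul _ _ _ hmem
      _ = (R.card : ℝ) * ((ε / (4 * ((k:ℝ)+1))) ^ (k+1) *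
            ((∑ y ∈ C, dist y a ^ (k+1)) / C.card)) := by rw [nsmul_eq_mul]
      _ ≤ (C.card : ℝ) * ((ε / (4 * ((k:ℝ)+1))) ^ (k+1) *
            ((∑ y ∈ C, dist y a ^ (k+1)) / C.card)) :=
          mul_le_mul_of_nonneg_right hcardle hTnn
      _ = (ε / (4 * zr)) ^ (k+1) * ∑ y ∈ C, dist y a ^ (k+1) := by
          rw [hzr]; field_simp
  -- constant computation
  have hKK : zr * (4*zr/ε)^k * (ε / (4 * zr)) ^ (k+1) = ε/4 := by
    have h1 : (4*zr/ε) * (ε/(4*zr)) = 1 := by field_simp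
    have h2 : zr * (4*zr/ε)^k * (ε / (4 * zr)) ^ (k+1)
        = zr * ((4*zr/ε) * (ε/(4*zr)))^k * (ε/(4*zr)) := by
      rw [mul_pow, pow_succ]; ring
    rw [h2, h1, one_pow]
    field_simp
  have hfinal : zr * (4*zr/ε)^k * ∑ x ∈ R, dist x a ^ (k+1) ≤
      2 * ε * ∑ x ∈ C, dist x a ^ (k+1) := by
    calc zr * (4*zr/ε)^k * ∑ x ∈ R, dist x a ^ (k+1)
        ≤ zr * (4*zr/ε)^k * ((ε / (4 * zr)) ^ (k+1) * ∑ y ∈ C, dist y a ^ (k+1)) :=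
          mul_le_mul_of_nonneg_left hring hKnn
      _ = (ε/4) * ∑ y ∈ C, dist y a ^ (k+1) := by rw [← mul_assoc, hKK]
      _ ≤ 2 * ε * ∑ y ∈ C, dist y a ^ (k+1) := by nlinarith
  calc |∑ x ∈ R, f x ^ (k+1) - (R.card : ℝ) * f a ^ (k+1)|
      ≤ ∑ x ∈ R, |f x ^ (k+1) - f a ^ (k+1)| := hsum1
    _ ≤ ε * (∑ x ∈ R, f x ^ (k+1)) + zr * (4*zr/ε)^k * ∑ x ∈ R, dist x a ^ (k+1) := hsum2
    _ ≤ ε * (∑ x ∈ R, f x ^ (k+1)) + 2 * ε * ∑ x ∈ C, dist x a ^ (k+1) := by linarith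
end

section
/- For z > 1 and 0 ≤ a ≤ n, the function f(x) = a·|x|^z + (n−a)·|1−x|^z on ℝ attains its minimum value min_x f(x) = a(n−a) / ((n−a)^{1/(z−1)} + a^{1/(z−1)})^{z−1}. -/
open Real

/-- Tangent line inequality for `u ^ z` at `t`. -/
lemma tangent_rpow {t u z : ℝ} (ht : 0 < t) (hu : 0 ≤ u) (hz : 1 ≤ z) :
    t ^ z + z * t ^ (z - 1) * (u - t) ≤ u ^ z := by
  have hs : (-1 : ℝ) ≤ u / t - 1 := by
    have : 0 ≤ u / t := div_nonneg hu ht.le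
    linarith
  have hber := one_add_mul_self_le_rpow_one_add hs hz
  have h1 : (1 : ℝ) + (u / t - 1) = u / t := by ring
  rw [h1] at hber
  have hdiv : (u / t) ^ z = u ^ z / t ^ z := Real.div_rpow hu ht.le z
  rw [hdiv] at hber
  have htz : (0 : ℝ) < t ^ z := Real.rpow_pos_of_pos ht z
  have hsub : t ^ (z - 1) = t ^ z / t := by
    rw [Real.rpow_sub ht, Real.rpow_one]
  rw [hsub]
  have := mul_le_mul_of_nonneg_left hber htz.le
  have ht' : t ≠ 0 := ht.ne'
  calc t ^ z + z * (t ^ z / t) * (u - t)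
      = t ^ z * (1 + z * (u / t - 1)) := by field_simp
    _ ≤ t ^ z * (u ^ z / t ^ z) := this
    _ = u ^ z := by field_simp

theorem stmt16 (a n z : ℝ) (ha : 0 < a) (han : a < n) (hz : 1 < z) :
    IsLeast (Set.range fun x : ℝ => a * |x| ^ z + (n - a) * |1 - x| ^ z)
      (a * (n - a) / ((n - a) ^ (z - 1)⁻¹ + a ^ (z - 1)⁻¹) ^ (z - 1)) := by
  set b := n - a with hb
  have hbpos : 0 < b := by simp [hb]; linarith
  have hz1 : (0 : ℝ) < z - 1 := by linarith
  have hz1' : z - 1 ≠ 0 := hz1.ne'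
  set A := a ^ (z - 1)⁻¹ with hA
  set B := b ^ (z - 1)⁻¹ with hB
  have hApos : 0 < A := Real.rpow_pos_of_pos ha _
  have hBpos : 0 < B := Real.rpow_pos_of_pos hbpos _
  set S := B + A with hS
  have hSpos : 0 < S := by positivity
  have hAz : A ^ (z - 1) = a := Real.rpow_inv_rpow ha.le hz1'
  have hBz : B ^ (z - 1) = b := Real.rpow_inv_rpow hbpos.le hz1'
  set x0 := B / S with hx0
  have hx0pos : 0 < x0 := div_pos hBpos hSpos
  have hx0lt : x0 < 1 := by
    rw [hx0, div_lt_one hSpos]; simp [hS]; linarith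
  have ht2 : 1 - x0 = A / S := by
    rw [hx0]; field_simp [hS]; linarith
  have ht2pos : 0 < 1 - x0 := by linarith
  set M := a * b / S ^ (z - 1) with hM
  have hMpos : 0 < M := by
    have := Real.rpow_pos_of_pos hSpos (z - 1)
    exact div_pos (mul_pos ha hbpos) this
  -- key: a * x0 ^ (z-1) = M and b * (1-x0) ^ (z-1) = M
  have hkey1 : a * x0 ^ (z - 1) = M := by
    rw [hx0, Real.div_rpow hBpos.le hSpos.le, hBz, hM]
    field_simp
  have hkey2 : b * (1 - x0) ^ (z - 1) = M := by
    rw [ht2, Real.div_rpow hApos.le hSpos.le, hAz, hM]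
    field_simp
  -- value at x0
  have hx0z : a * x0 ^ z + b * (1 - x0) ^ z = M := by
    have h1 : x0 ^ z = x0 ^ (z - 1) * x0 := by
      rw [← Real.rpow_add_one hx0pos.ne']; ring_nf
    have h2 : (1 - x0) ^ z = (1 - x0) ^ (z - 1) * (1 - x0) := by
      rw [← Real.rpow_add_one ht2pos.ne']; ring_nf
    calc a * x0 ^ z + b * (1 - x0) ^ z
        = (a * x0 ^ (z - 1)) * x0 + (b * (1 - x0) ^ (z - 1)) * (1 - x0) := by
          rw [h1, h2]; ring
      _ = M * x0 + M * (1 - x0) := by rw [hkey1, hkey2]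
      _ = M := by ring
  constructor
  · exact ⟨x0, by
      simp only [abs_of_pos hx0pos, abs_of_pos ht2pos]
      rw [hx0z, hM, hS]⟩
  · rintro y ⟨x, rfl⟩
    simp only
    have h1 : a * x0 ^ z + a * (z * x0 ^ (z - 1)) * (|x| - x0) ≤ a * |x| ^ z := by
      have := tangent_rpow hx0pos (abs_nonneg x) hz.le
      nlinarith [this, ha]
    have h2 : b * (1 - x0) ^ z + b * (z * (1 - x0) ^ (z - 1)) * (|1 - x| - (1 - x0))
        ≤ b * |1 - x| ^ z := by
      have := tangent_rpow ht2pos (abs_nonneg (1 - x)) hz.le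
      nlinarith [this, hbpos]
    have habs : 1 ≤ |x| + |1 - x| := by
      have h := abs_add_le x (1 - x)
      simp only [add_sub_cancel, abs_one] at h
      linarith
    have hc1 : a * (z * x0 ^ (z - 1)) = z * M := by
      rw [← hkey1]; ring
    have hc2 : b * (z * (1 - x0) ^ (z - 1)) = z * M := by
      rw [← hkey2]; ring
    have hzM : 0 < z * M := by positivity
    have hsum : M + z * M * (|x| + |1 - x| - 1) ≤ a * |x| ^ z + b * |1 - x| ^ z := by
      calc M + z * M * (|x| + |1 - x| - 1)
          = (a * x0 ^ z + b * (1 - x0) ^ z)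
            + (a * (z * x0 ^ (z - 1)) * (|x| - x0)
              + b * (z * (1 - x0) ^ (z - 1)) * (|1 - x| - (1 - x0))) := by
            rw [hx0z, hc1, hc2]; ring
        _ ≤ a * |x| ^ z + b * |1 - x| ^ z := by linarith [h1, h2]
    nlinarith [hsum, hzM, habs]
end
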